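/- arXiv:1310.0401 — 4 statements merged into one kernel-verified Lean document; each statement's English description precedes it below -/
import Mathlib

section
/- Let p ∈ (0,1), q := 1−p, let (X_j)_{j≥0} be i.i.d. {0,1}-valued random variables with P(X_j = 1) = p, let Z_n := #{0 ≤ j ≤ n−1 : X_j ≠ X_{j+1}}, and for an integer K ≥ 1 let τ_{2K} := inf{n ≥ 1 : Z_n = 2K} be the index of the 2K-th changeover. Then τ_{2K} has the same distribution as H_1 + T_1 + ⋯ + H_K + T_K, where H_1, …, H_K, T_1, …, T_K are independent, each H_i is geometric with P(H_i = m) = q(1−q)^{m−1} (m ≥ 1) and each T_i is geometric with P(T_i = m) = p(1−p)^{m−1} (m ≥ 1); that is, P(τ_{2K} = n) = P(H_1 + T_1 + ⋯ + H_K + T_K = n) for every integer n. -/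
open MeasureTheory ProbabilityTheory

open Finset MeasureTheory ProbabilityTheory
open scoped ENNReal

namespace ChgAux

noncomputable def D (P : Bool → ℝ≥0∞) : ℕ → ℕ → Bool → ℝ≥0∞
  | n, 0, _ => if n = 0 then 1 else 0
  | n, k+1, b => ∑ l ∈ Finset.range n, P b ^ (l+1) * D P (n - (l+1)) k (!b)

def chg {m : ℕ} (w : Fin (m+1) → Bool) : ℕ :=
  ∑ j : Fin m, if w j.castSucc ≠ w j.succ then 1 else 0

noncomputable def wt (P : Bool → ℝ≥0∞) {m : ℕ} (w : Fin m → Bool) : ℝ≥0∞ := ∏ j, P (w j)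

theorem D_zero (P : Bool → ℝ≥0∞) (n : ℕ) (b : Bool) :
    D P n 0 b = if n = 0 then 1 else 0 := rfl

theorem D_succ' (P : Bool → ℝ≥0∞) (n k : ℕ) (b : Bool) :
    D P n (k+1) b = ∑ l ∈ Finset.range n, P b ^ (l+1) * D P (n - (l+1)) k (!b) := rfl

theorem D_succ (P : Bool → ℝ≥0∞) (n k : ℕ) (b : Bool) :
    D P (n+1) (k+1) b = P b * (D P n k (!b) + D P n (k+1) b) := by
  rw [D_succ', Finset.sum_range_succ']
  have h1 : ∀ l ∈ Finset.range n, P b ^ (l+1+1) * D P (n + 1 - (l+1+1)) k (!b)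
      = P b * (P b ^ (l+1) * D P (n - (l+1)) k (!b)) := by
    intro l _
    have : n + 1 - (l+1+1) = n - (l+1) := by omega
    rw [this]; ring
  rw [Finset.sum_congr rfl h1, ← Finset.mul_sum, ← D_succ']
  have : n + 1 - (0+1) = n := by omega
  rw [this]; ring

theorem wt_snoc (P : Bool → ℝ≥0∞) {m : ℕ} (v : Fin m → Bool) (c : Bool) :
    wt P (Fin.snoc v c) = wt P v * P c := by
  unfold wt
  rw [Fin.prod_univ_castSucc]
  simp

theorem chg_snoc {m : ℕ} (v : Fin (m+1) → Bool) (c : Bool) :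
    chg (Fin.snoc v c) = chg v + (if v (Fin.last m) ≠ c then 1 else 0) := by
  unfold chg
  rw [Fin.sum_univ_castSucc]
  congr 1
  · apply Finset.sum_congr rfl
    intro j _
    have h1 : (Fin.snoc v c : Fin (m+2) → Bool) j.castSucc.castSucc = v j.castSucc :=
      Fin.snoc_castSucc ..
    have h2 : (Fin.snoc v c : Fin (m+2) → Bool) j.castSucc.succ = v j.succ := by
      rw [Fin.succ_castSucc]; exact Fin.snoc_castSucc ..
    rw [h1, h2]
  · have h1 : (Fin.snoc v c : Fin (m+2) → Bool) (Fin.last m).castSucc = v (Fin.last m) :=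
      Fin.snoc_castSucc ..
    have h2 : (Fin.snoc v c : Fin (m+2) → Bool) (Fin.last m).succ = c := by
      rw [Fin.succ_last]; exact Fin.snoc_last ..
    rw [h1, h2]

def snocEquiv (m : ℕ) : ((Fin (m+1) → Bool) × Bool) ≃ (Fin (m+2) → Bool) where
  toFun x := Fin.snoc x.1 x.2
  invFun w := (Fin.init w, w (Fin.last _))
  left_inv x := by simp [Fin.init_snoc]
  right_inv w := by simp [Fin.snoc_init_self]

theorem wordsum (P : Bool → ℝ≥0∞) :
    ∀ (m k : ℕ) (b : Bool),
    (∑ w : Fin (m+1) → Bool, if chg w = k ∧ w (Fin.last m) = b then wt P w else 0)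
      = D P (m+1) (k+1) b := by
  intro m
  induction m with
  | zero =>
    intro k b
    rw [D_succ', Finset.sum_range_one]
    have hc : ∀ w : Fin 1 → Bool, chg w = 0 := by
      intro w; unfold chg; simp
    have h0 : (∑ w : Fin 1 → Bool, if chg w = k ∧ w (Fin.last 0) = b then wt P w else 0)
        = ∑ w : Fin 1 → Bool, if 0 = k ∧ w (Fin.last 0) = b then wt P w else 0 := by
      apply Finset.sum_congr rfl; intro w _; rw [hc w]
    rw [h0]
    rcases k with _ | k
    · simp only [true_and]
      rw [Fintype.sum_eq_single (fun _ => b) ?_]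
      · simp [wt, D_zero]
      · intro w hw
        rw [if_neg]
        intro h
        exact hw (funext fun j => by rw [Subsingleton.elim j (Fin.last 0)]; exact h)
    · have : D P 0 (k+1) (!b) = 0 := by rw [D_succ']; simp
      simp [this]
  | succ m ih =>
    intro k b
    have hcomp := Equiv.sum_comp (snocEquiv m)
      (fun w : Fin (m+2) → Bool => if chg w = k ∧ w (Fin.last (m+1)) = b then wt P w else 0)
    rw [← hcomp, Fintype.sum_prod_type]
    simp only [snocEquiv, Equiv.coe_fn_mk]
    have step1 : ∀ v : Fin (m+1) → Bool,
        (∑ c : Bool, if chg (Fin.snoc v c) = k ∧ (Fin.snoc v c : Fin (m+2) → Bool) (Fin.last (m+1)) = b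
            then wt P (Fin.snoc v c) else 0)
        = (if chg v + (if v (Fin.last m) ≠ b then 1 else 0) = k then wt P v else 0) * P b := by
      intro v
      have : ∀ c : Bool, (if chg (Fin.snoc v c) = k ∧ (Fin.snoc v c : Fin (m+2) → Bool) (Fin.last (m+1)) = b
            then wt P (Fin.snoc v c) else 0)
          = if c = b then (if chg v + (if v (Fin.last m) ≠ c then 1 else 0) = k then wt P v else 0) * P c else 0 := by
        intro c
        rw [chg_snoc, wt_snoc]
        have hl : (Fin.snoc v c : Fin (m+2) → Bool) (Fin.last (m+1)) = c := Fin.snoc_last ..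
        rw [hl]
        by_cases h1 : c = b <;> by_cases h2 : chg v + (if v (Fin.last m) ≠ c then 1 else 0) = k <;>
          simp [h1, h2]
      rw [Finset.sum_congr rfl (fun c _ => this c)]
      rw [Finset.sum_ite_eq' Finset.univ b
        (fun c => (if chg v + (if v (Fin.last m) ≠ c then 1 else 0) = k then wt P v else 0) * P c)]
      simp
    refine Eq.trans (Finset.sum_congr rfl (fun v _ => step1 v)) ?_
    have split : ∀ v : Fin (m+1) → Bool,
        (if chg v + (if v (Fin.last m) ≠ b then 1 else 0) = k then wt P v else 0) * P b
        = (if chg v = k ∧ v (Fin.last m) = b then wt P v else 0) * P b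
          + (if chg v + 1 = k ∧ v (Fin.last m) = !b then wt P v else 0) * P b := by
      intro v
      by_cases hv : v (Fin.last m) = b
      · have h1 : (if v (Fin.last m) ≠ b then 1 else 0) = 0 := by simp [hv]
        rw [h1]
        simp [hv]
      · have hv' : v (Fin.last m) = !b := by
          revert hv; rcases hb : v (Fin.last m) <;> rcases hb2 : b <;> simp
        have h1 : (if v (Fin.last m) ≠ b then 1 else 0) = 1 := by simp [hv]
        rw [h1]
        simp [hv']
    rw [Finset.sum_congr rfl (fun v _ => split v), Finset.sum_add_distrib,
      ← Finset.sum_mul, ← Finset.sum_mul, ih k b]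
    rcases k with _ | k'
    · have : ∀ v : Fin (m+1) → Bool,
          (if chg v + 1 = 0 ∧ v (Fin.last m) = !b then wt P v else 0) = 0 := by
        intro v; rw [if_neg]; rintro ⟨h, -⟩; omega
      rw [Finset.sum_congr rfl (fun v _ => this v)]
      rw [D_succ P (m+1) 0 b, D_zero]
      simp [mul_comm]
    · have : ∀ v : Fin (m+1) → Bool,
          (if chg v + 1 = k' + 1 ∧ v (Fin.last m) = !b then wt P v else 0)
          = (if chg v = k' ∧ v (Fin.last m) = !b then wt P v else 0) := by
        intro v
        congr 1
        simp only [eq_iff_iff, and_congr_left_iff]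
        intro _; omega
      rw [Finset.sum_congr rfl (fun v _ => this v), ih k' (!b), D_succ P (m+1) (k'+1) b]
      ring

theorem D_not (P : Bool → ℝ≥0∞) : ∀ (k n : ℕ) (b : Bool),
    D (fun c => P (!c)) n k b = D P n k (!b) := by
  intro k
  induction k with
  | zero => intro n b; rfl
  | succ k ih =>
    intro n b
    rw [D_succ', D_succ']
    apply Finset.sum_congr rfl
    intro l _
    rw [ih]

def comps (K n : ℕ) : Finset ((Bool × Fin K) → ℕ) :=
  (Fintype.piFinset fun _ => Finset.Icc 1 n).filter fun c => ∑ b, c b = n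

theorem mem_comps {K n : ℕ} {c : (Bool × Fin K) → ℕ} :
    c ∈ comps K n ↔ (∀ b, 1 ≤ c b ∧ c b ≤ n) ∧ ∑ b, c b = n := by
  simp [comps, Fintype.mem_piFinset, Finset.mem_Icc]

def restrict {K : ℕ} (c : Bool × Fin (K+1) → ℕ) : Bool × Fin K → ℕ :=
  fun b => c (b.1, b.2.castSucc)

theorem sum_split (K : ℕ) (c : Bool × Fin (K+1) → ℕ) :
    ∑ b, c b = (∑ b : Bool × Fin K, restrict c b)
      + (c (false, Fin.last K) + c (true, Fin.last K)) := by
  simp only [restrict, Fintype.sum_prod_type, Fintype.sum_bool, Fin.sum_univ_castSucc]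
  omega

theorem prod_split (K : ℕ) (g : Bool × Fin (K+1) → ℝ≥0∞) :
    ∏ b, g b = (∏ b : Bool × Fin K, g (b.1, b.2.castSucc))
      * (g (false, Fin.last K) * g (true, Fin.last K)) := by
  simp only [Fintype.prod_prod_type, Fintype.prod_bool, Fin.prod_univ_castSucc]
  ring

def glue {K : ℕ} (t h : ℕ) (c' : (Bool × Fin K) → ℕ) : (Bool × Fin (K+1)) → ℕ :=
  fun b => Fin.lastCases (if b.1 then t+1 else h+1) (fun j => c' (b.1, j)) b.2

@[simp] theorem glue_castSucc {K : ℕ} (t h : ℕ) (c' : (Bool × Fin K) → ℕ) (s : Bool) (j : Fin K) :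
    glue t h c' (s, j.castSucc) = c' (s, j) := by
  unfold glue; exact Fin.lastCases_castSucc ..

@[simp] theorem glue_last {K : ℕ} (t h : ℕ) (c' : (Bool × Fin K) → ℕ) (s : Bool) :
    glue t h c' (s, Fin.last K) = if s then t+1 else h+1 := by
  unfold glue; exact Fin.lastCases_last ..

theorem compsum (P : Bool → ℝ≥0∞) :
    ∀ K n, (∑ c ∈ comps K n, ∏ b : Bool × Fin K, P (!b.1) ^ (c b)) = D P n (2*K) false := by
  intro K
  induction K with
  | zero =>
    intro n
    rcases n with _ | n
    · rw [show 2*0 = 0 from rfl, D_zero, if_pos rfl]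
      have hc : comps 0 0 = {fun b => (Fin.elim0 b.2 : ℕ)} := by
        ext c
        simp only [mem_comps, Finset.mem_singleton]
        constructor
        · intro _
          exact Subsingleton.elim _ _
        · intro _
          exact ⟨fun b => b.2.elim0, by simp⟩
      rw [hc, Finset.sum_singleton]
      simp
    · rw [show 2*0 = 0 from rfl, D_zero, if_neg (by omega)]
      have hc : comps 0 (n+1) = ∅ := by
        ext c
        simp [mem_comps]
      rw [hc, Finset.sum_empty]
  | succ K ih =>
    intro n
    have e1 : 2*(K+1) = (2*K+1)+1 := by ring
    rw [e1, D_succ']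
    have e2 : ∀ m, D P m (2*K+1) true
        = ∑ h ∈ Finset.range m, P true ^ (h+1) * D P (m - (h+1)) (2*K) false := by
      intro m; rw [D_succ']; rfl
    set T := (Finset.range n).sigma (fun t =>
      ((Finset.range (n - (t+1))).sigma (fun h => comps K (n - (t+1) - (h+1))))) with hT
    have key : (∑ c ∈ comps (K+1) n, ∏ b : Bool × Fin (K+1), P (!b.1) ^ (c b))
        = ∑ x ∈ T, P false ^ (x.1+1) * (P true ^ (x.2.1+1)
            * ∏ b : Bool × Fin K, P (!b.1) ^ (x.2.2 b)) := by
      apply Finset.sum_nbij'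
        (i := fun c => (⟨c (true, Fin.last K) - 1, c (false, Fin.last K) - 1,
          restrict c⟩ : (t : ℕ) × (h : ℕ) × ((Bool × Fin K) → ℕ)))
        (j := fun x => glue x.1 x.2.1 x.2.2)
      · -- hi
        intro c hc
        obtain ⟨hb, hs⟩ := mem_comps.mp hc
        have hsum := sum_split K c
        have h1 := hb (true, Fin.last K)
        have h2 := hb (false, Fin.last K)
        rw [hT]
        refine Finset.mem_sigma.mpr ⟨?_, ?_⟩ <;> dsimp only
        · exact Finset.mem_range.mpr (by omega)
        refine Finset.mem_sigma.mpr ⟨?_, ?_⟩ <;> dsimp only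
        · exact Finset.mem_range.mpr (by omega)
        refine mem_comps.mpr ⟨?_, by omega⟩
        intro b
        refine ⟨(hb (b.1, b.2.castSucc)).1, ?_⟩
        have := Finset.single_le_sum (f := restrict c)
          (fun i _ => Nat.zero_le _) (Finset.mem_univ b)
        have hr : restrict c b = c (b.1, b.2.castSucc) := rfl
        omega
      · -- hj
        intro x hx
        rw [hT] at hx
        obtain ⟨ht, hx⟩ := Finset.mem_sigma.mp hx
        obtain ⟨hh, hc'⟩ := Finset.mem_sigma.mp hx
        rw [Finset.mem_range] at ht hh
        obtain ⟨hb, hs⟩ := mem_comps.mp hc'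
        refine mem_comps.mpr ⟨?_, ?_⟩
        · rintro ⟨s, i⟩
          induction i using Fin.lastCases with
          | last =>
            rcases s
            · rw [glue_last]; constructor <;> simp <;> omega
            · rw [glue_last]; constructor <;> simp <;> omega
          | cast j =>
            rw [glue_castSucc]
            have := hb (s, j)
            omega
        · rw [sum_split]
          have hr : restrict (glue x.1 x.2.1 x.2.2) = x.2.2 := by
            funext b
            exact glue_castSucc ..
          rw [hr, glue_last, glue_last]
          simp only [if_true, if_false, Bool.false_eq_true, Bool.true_eq_false]
          omega
      · -- left_inv
        intro c hc
        obtain ⟨hb, hs⟩ := mem_comps.mp hc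
        funext b
        rcases b with ⟨s, i⟩
        induction i using Fin.lastCases with
        | last =>
          have h1 := hb (true, Fin.last K)
          have h2 := hb (false, Fin.last K)
          dsimp only
          rw [glue_last]
          rcases s
          · simp only [if_false, Bool.false_eq_true]; omega
          · simp only [if_true]; omega
        | cast j =>
          dsimp only
          rw [glue_castSucc]
          rfl
      · -- right_inv
        intro x hx
        rcases x with ⟨t, h, c'⟩
        dsimp only
        have e1 : glue t h c' (true, Fin.last K) = t+1 := by rw [glue_last]; simp
        have e2 : glue t h c' (false, Fin.last K) = h+1 := by rw [glue_last]; simp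
        have e3 : restrict (glue t h c') = c' := by
          funext b
          exact glue_castSucc ..
        rw [e1, e2, e3]
        simp
      · -- h
        intro c hc
        obtain ⟨hb, hs⟩ := mem_comps.mp hc
        have h1 := hb (true, Fin.last K)
        have h2 := hb (false, Fin.last K)
        rw [prod_split]
        have e3 : c (true, Fin.last K) - 1 + 1 = c (true, Fin.last K) := by omega
        have e4 : c (false, Fin.last K) - 1 + 1 = c (false, Fin.last K) := by omega
        simp only [e3, e4, Bool.not_true, Bool.not_false, restrict]
        ring
    rw [key, hT, Finset.sum_sigma]
    apply Finset.sum_congr rfl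
    intro t _
    rw [Finset.sum_sigma]
    simp only [Bool.not_false]
    rw [e2, Finset.mul_sum]
    apply Finset.sum_congr rfl
    intro h _
    rw [← ih, Finset.mul_sum, Finset.mul_sum]


def swapEquiv (K : ℕ) : (Bool × Fin K) ≃ (Bool × Fin K) where
  toFun b := (!b.1, b.2)
  invFun b := (!b.1, b.2)
  left_inv b := by simp
  right_inv b := by simp

theorem compsum_swap (P : Bool → ℝ≥0∞) (K n : ℕ) :
    (∑ c ∈ comps K n, ∏ b : Bool × Fin K, P (b.1) ^ (c b))
      = ∑ c ∈ comps K n, ∏ b : Bool × Fin K, P (!b.1) ^ (c b) := by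
  apply Finset.sum_nbij' (i := fun c => fun b : Bool × Fin K => c (!b.1, b.2))
    (j := fun c => fun b : Bool × Fin K => c (!b.1, b.2))
  · intro c hc
    obtain ⟨hb, hs⟩ := mem_comps.mp hc
    refine mem_comps.mpr ⟨fun b => hb _, ?_⟩
    have := (Equiv.sum_comp (swapEquiv K) c).trans hs
    simpa [swapEquiv] using this
  · intro c hc
    obtain ⟨hb, hs⟩ := mem_comps.mp hc
    refine mem_comps.mpr ⟨fun b => hb _, ?_⟩
    have := (Equiv.sum_comp (swapEquiv K) c).trans hs
    simpa [swapEquiv] using this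
  · intro c _; funext b; simp
  · intro c _; funext b; simp
  · intro c _
    have := Equiv.prod_comp (swapEquiv K) (fun b : Bool × Fin K => P (b.1) ^ (c b))
    rw [← this]
    apply Finset.prod_congr rfl
    intro b _
    simp [swapEquiv]

theorem D_two_sym (P : Bool → ℝ≥0∞) (K n : ℕ) :
    D P n (2*K) true = D P n (2*K) false := by
  have h1 := compsum (fun c => P (!c)) K n
  rw [D_not] at h1
  have h2 : (∑ c ∈ comps K n, ∏ b : Bool × Fin K, P (!(!b.1)) ^ (c b))
      = ∑ c ∈ comps K n, ∏ b : Bool × Fin K, P (b.1) ^ (c b) := by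
    apply Finset.sum_congr rfl; intro c _; apply Finset.prod_congr rfl; intro b _; simp
  rw [h2] at h1
  rw [show (!false) = true from rfl] at h1
  rw [← h1, compsum_swap, compsum]

theorem wordsum_tau (P : Bool → ℝ≥0∞) (m k : ℕ) :
    (∑ w : Fin (m+2) → Bool, if chg w = k+1 ∧ ¬(w ((Fin.last m).castSucc) = w (Fin.last (m+1)))
        then wt P w else 0)
    = P true * D P (m+1) (k+1) false + P false * D P (m+1) (k+1) true := by
  have hcomp := Equiv.sum_comp (snocEquiv m)
    (fun w : Fin (m+2) → Bool =>
      if chg w = k+1 ∧ ¬(w ((Fin.last m).castSucc) = w (Fin.last (m+1))) then wt P w else 0)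
  rw [← hcomp, Fintype.sum_prod_type]
  simp only [snocEquiv, Equiv.coe_fn_mk]
  have step : ∀ (v : Fin (m+1) → Bool) (c : Bool),
      (if chg (Fin.snoc v c) = k+1
          ∧ ¬((Fin.snoc v c : Fin (m+2) → Bool) ((Fin.last m).castSucc)
              = (Fin.snoc v c : Fin (m+2) → Bool) (Fin.last (m+1)))
        then wt P (Fin.snoc v c) else 0)
      = (if chg v = k ∧ v (Fin.last m) = !c then wt P v else 0) * P c := by
    intro v c
    rw [chg_snoc, wt_snoc]
    have e1 : (Fin.snoc v c : Fin (m+2) → Bool) ((Fin.last m).castSucc) = v (Fin.last m) :=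
      Fin.snoc_castSucc ..
    have e2 : (Fin.snoc v c : Fin (m+2) → Bool) (Fin.last (m+1)) = c := by
      rw [← Fin.succ_last, Fin.succ_last]; exact Fin.snoc_last ..
    rw [e1, e2]
    by_cases hv : v (Fin.last m) = c
    · have h1 : (if v (Fin.last m) ≠ c then 1 else 0) = 0 := by simp [hv]
      rw [h1]
      simp [hv]
    · have hv' : v (Fin.last m) = !c := by
        revert hv; rcases hb : v (Fin.last m) <;> rcases hb2 : c <;> simp
      have h1 : (if v (Fin.last m) ≠ c then 1 else 0) = 1 := by simp [hv]
      rw [h1]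
      simp only [hv', ne_eq, hv, not_false_eq_true, and_true]
      by_cases h3 : chg v = k
      · have h4 : chg v + 1 = k + 1 := by omega
        simp [h3, h4]
      · have h4 : ¬ (chg v + 1 = k + 1) := by omega
        simp [h3, h4]
  refine Eq.trans (Finset.sum_congr rfl (fun v _ => Finset.sum_congr rfl (fun c _ => step v c))) ?_
  rw [Finset.sum_comm]
  rw [Fintype.sum_bool]
  rw [← Finset.sum_mul, ← Finset.sum_mul, wordsum, wordsum]
  rw [show (!true) = false from rfl, show (!false) = true from rfl]
  ring
end ChgAux


namespace ChgAux

theorem meas_eq_sum_cylinders {Ω : Type*} [MeasurableSpace Ω] (μ : Measure Ω)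
    {ι α : Type*} [Fintype ι] [DecidableEq (ι → α)]
    (f : ι → Ω → α) (S : Finset (ι → α)) (E : Set Ω)
    (hmeas : ∀ (c : ι → α) (i : ι), MeasurableSet {ω | f i ω = c i})
    (hE : ∀ ω, ω ∈ E ↔ (fun i => f i ω) ∈ S) :
    μ E = ∑ c ∈ S, μ (⋂ i, {ω | f i ω = c i}) := by
  have hEq : E = ⋃ c ∈ S, ⋂ i, {ω | f i ω = c i} := by
    ext ω
    simp only [Set.mem_iUnion, Set.mem_iInter, Set.mem_setOf_eq, hE ω]
    constructor
    · intro h; exact ⟨_, h, fun i => rfl⟩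
    · rintro ⟨c, hc, hfc⟩
      have : (fun i => f i ω) = c := funext hfc
      rwa [this]
  rw [hEq, measure_biUnion_finset ?_ ?_]
  · intro c hc c' hc' hne
    refine Set.disjoint_left.mpr ?_
    intro ω h1 h2
    apply hne
    funext i
    have e1 := Set.mem_iInter.mp h1 i
    have e2 := Set.mem_iInter.mp h2 i
    exact e1.symm.trans e2
  · intro c _
    exact MeasurableSet.iInter fun i => hmeas c i

end ChgAux


/-- The time `τ_{2K}` of the `2K`-th changeover in a sequence of i.i.d. Bernoulli(p)
coin flips has the same distribution as the sum `H₁ + T₁ + ⋯ + H_K + T_K` of `2K`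
independent geometric random variables, `K` of them with parameter `q = 1 - p` and
`K` of them with parameter `p`. -/
theorem changeover_time_eq_geometric_sum_distrib
    {Ω Ω' : Type*} [MeasurableSpace Ω] [MeasurableSpace Ω']
    (μ : Measure Ω) [IsProbabilityMeasure μ]
    (ν : Measure Ω') [IsProbabilityMeasure ν]
    (p : ℝ) (hp : p ∈ Set.Ioo (0 : ℝ) 1)
    (X : ℕ → Ω → Bool)
    (hmX : ∀ j, Measurable (X j))
    (hXindep : iIndepFun X μ)
    (hXdist : ∀ j, μ {ω | X j ω = true} = ENNReal.ofReal p)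
    (Z : ℕ → Ω → ℕ)
    (hZ : ∀ n ω, Z n ω = ((Finset.range n).filter (fun j => X j ω ≠ X (j + 1) ω)).card)
    (K : ℕ) (hK : 1 ≤ K)
    (τ : Ω → ℕ)
    (hτ : ∀ ω, τ ω = sInf {n : ℕ | 1 ≤ n ∧ Z n ω = 2 * K})
    -- `HT (false, i)` is the geometric variable `H_i` (parameter `q = 1 - p`) and
    -- `HT (true, i)` is the geometric variable `T_i` (parameter `p`); all independent.
    (HT : Bool × Fin K → Ω' → ℕ)
    (hmHT : ∀ b, Measurable (HT b))
    (hHTindep : iIndepFun HT ν)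
    (hHTpos : ∀ b ω, 1 ≤ HT b ω)
    (hHdist : ∀ i : Fin K, ∀ m : ℕ, 1 ≤ m →
      ν {ω | HT (false, i) ω = m} = ENNReal.ofReal ((1 - p) * p ^ (m - 1)))
    (hTdist : ∀ i : Fin K, ∀ m : ℕ, 1 ≤ m →
      ν {ω | HT (true, i) ω = m} = ENNReal.ofReal (p * (1 - p) ^ (m - 1))) :
    ∀ n : ℕ, μ {ω | τ ω = n} = ν {ω | ∑ b, HT b ω = n} := by
  have hp0 : (0:ℝ) ≤ p := hp.1.le
  have hp1 : (0:ℝ) ≤ 1 - p := by have := hp.2.le; linarith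
  set P : Bool → ℝ≥0∞ := fun b => if b then ENNReal.ofReal p else ENNReal.ofReal (1 - p) with hP
  have hPt : P true = ENNReal.ofReal p := rfl
  have hPf : P false = ENNReal.ofReal (1 - p) := rfl
  have hPsum : P true + P false = 1 := by
    rw [hPt, hPf, ← ENNReal.ofReal_add hp0 hp1]
    norm_num
  -- distribution of each X j
  have hXb : ∀ (j : ℕ) (b : Bool), μ (X j ⁻¹' {b}) = P b := by
    intro j b
    have ht : μ (X j ⁻¹' {true}) = ENNReal.ofReal p := by
      rw [show X j ⁻¹' {true} = {ω | X j ω = true} from by ext ω; simp]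
      exact hXdist j
    rcases b
    · have hc : X j ⁻¹' {false} = (X j ⁻¹' {true})ᶜ := by ext ω; simp
      rw [hc, measure_compl ((hmX j) (by trivial)) (measure_ne_top μ _), ht, measure_univ, hPf,
        ← ENNReal.ofReal_one, ← ENNReal.ofReal_sub _ hp0]
    · exact ht
  ----------------------------------------------------------------
  -- RHS computation, valid for every n
  ----------------------------------------------------------------
  have hRHS : ∀ n : ℕ, ν {ω | ∑ b, HT b ω = n} = ChgAux.D P n (2*K) false := by
    intro n
    have hE : ∀ ω, ω ∈ {ω | ∑ b, HT b ω = n} ↔ (fun b => HT b ω) ∈ ChgAux.comps K n := by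
      intro ω
      simp only [Set.mem_setOf_eq, ChgAux.mem_comps]
      constructor
      · intro h
        refine ⟨fun b => ⟨hHTpos b ω, ?_⟩, h⟩
        calc HT b ω ≤ ∑ b', HT b' ω :=
              Finset.single_le_sum (f := fun b' => HT b' ω)
                (fun i _ => Nat.zero_le _) (Finset.mem_univ b)
          _ = n := h
      · rintro ⟨-, h⟩; exact h
    have hmeas : ∀ (c : Bool × Fin K → ℕ) (b : Bool × Fin K),
        MeasurableSet {ω | HT b ω = c b} := by
      intro c b
      have : {ω | HT b ω = c b} = HT b ⁻¹' {c b} := by ext ω; simp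
      rw [this]
      exact (hmHT b) MeasurableSpace.measurableSet_top
    rw [ChgAux.meas_eq_sum_cylinders ν HT (ChgAux.comps K n) _ hmeas hE]
    have hcyl : ∀ c : Bool × Fin K → ℕ,
        ν (⋂ b, {ω | HT b ω = c b}) = ∏ b, ν {ω | HT b ω = c b} := by
      intro c
      exact hHTindep.meas_iInter (fun b => ⟨{c b}, MeasurableSpace.measurableSet_top, rfl⟩)
    rw [Finset.sum_congr rfl (fun c _ => hcyl c)]
    rw [← ChgAux.compsum P K n]
    apply Finset.sum_congr rfl
    intro c hc
    obtain ⟨hb, -⟩ := ChgAux.mem_comps.mp hc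
    have h1 : ∀ b : Bool × Fin K, ν {ω | HT b ω = c b} = P b.1 * P (!b.1) ^ (c b - 1) := by
      rintro ⟨s, i⟩
      rcases s
      · rw [hHdist i _ (hb (false, i)).1]
        rw [ENNReal.ofReal_mul hp1, ENNReal.ofReal_pow hp0]
        rfl
      · rw [hTdist i _ (hb (true, i)).1]
        rw [ENNReal.ofReal_mul hp0, ENNReal.ofReal_pow hp1]
        rfl
    rw [Finset.prod_congr rfl (fun b _ => h1 b), Finset.prod_mul_distrib]
    have h2 : ∀ b : Bool × Fin K, P (!b.1) ^ (c b) = P (!b.1) ^ (c b - 1) * P (!b.1) := by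
      intro b
      conv_lhs => rw [show c b = (c b - 1) + 1 from by have := (hb b).1; omega]
      rw [pow_succ]
    rw [Finset.prod_congr rfl (fun b _ => h2 b), Finset.prod_mul_distrib]
    have h3 : (∏ b : Bool × Fin K, P (b.1)) = ∏ b : Bool × Fin K, P (!b.1) := by
      simp only [Fintype.prod_prod_type, Fintype.prod_bool, Finset.prod_const,
        Finset.card_univ, Fintype.card_fin, Bool.not_true, Bool.not_false]
      exact mul_comm _ _
    rw [h3, mul_comm]
  ----------------------------------------------------------------
  -- basic properties of Z
  ----------------------------------------------------------------
  have hZ0 : ∀ ω, Z 0 ω = 0 := by intro ω; simp [hZ]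
  have hZm : ∀ ω (a b : ℕ), a ≤ b → Z a ω ≤ Z b ω := by
    intro ω a b h
    rw [hZ, hZ]
    exact Finset.card_le_card (Finset.filter_subset_filter _ (Finset.range_subset_range.mpr h))
  have hZstep : ∀ ω (l : ℕ), Z (l+1) ω = Z l ω + (if X l ω ≠ X (l+1) ω then 1 else 0) := by
    intro ω l
    rw [hZ, hZ, Finset.range_add_one, Finset.filter_insert]
    split_ifs
    · rw [Finset.card_insert_of_notMem (by simp)]
    · rw [add_zero]
  have hIVT : ∀ ω (v l : ℕ), v ≤ Z l ω → ∃ l' ≤ l, Z l' ω = v := by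
    intro ω v l
    induction l with
    | zero =>
      intro h
      rw [hZ0] at h
      exact ⟨0, le_refl _, by rw [hZ0]; omega⟩
    | succ l ih =>
      intro h
      by_cases hh : v ≤ Z l ω
      · obtain ⟨l', hl', he⟩ := ih hh
        exact ⟨l', by omega, he⟩
      · refine ⟨l+1, le_refl _, ?_⟩
        have hst := hZstep ω l
        have h2 : Z (l+1) ω ≤ Z l ω + 1 := by rw [hst]; split_ifs <;> omega
        omega
  ----------------------------------------------------------------
  -- the case n = 0 : μ {τ = 0} = 0
  ----------------------------------------------------------------
  have hLHS0 : μ {ω | τ ω = 0} = 0 := by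
    have hsub : {ω | τ ω = 0} ⊆ ⋃ m : ℕ, {ω | ∀ j, m ≤ j → X j ω = X (j+1) ω} := by
      intro ω hω
      have hS : ∀ l, ¬ (1 ≤ l ∧ Z l ω = 2*K) := by
        intro l hl
        have hne : {n' : ℕ | 1 ≤ n' ∧ Z n' ω = 2*K}.Nonempty := ⟨l, hl⟩
        have hmem := Nat.sInf_mem hne
        rw [← hτ ω, hω] at hmem
        exact absurd hmem.1 (by omega)
      have hlt : ∀ l, Z l ω < 2*K := by
        intro l
        by_contra hge
        push_neg at hge
        obtain ⟨l', _, he⟩ := hIVT ω (2*K) l hge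
        have hl1 : 1 ≤ l' := by
          rcases Nat.eq_zero_or_pos l' with h0 | h0
          · subst h0; rw [hZ0] at he; omega
          · exact h0
        exact hS l' ⟨hl1, he⟩
      by_contra hnot
      simp only [Set.mem_iUnion, Set.mem_setOf_eq, not_exists] at hnot
      push_neg at hnot
      have hinf : {j | X j ω ≠ X (j+1) ω}.Infinite := by
        apply Set.infinite_of_forall_exists_gt
        intro a
        obtain ⟨j, hj1, hj2⟩ := hnot (a+1)
        exact ⟨j, hj2, by omega⟩
      obtain ⟨t, hts, htc⟩ := hinf.exists_subset_card_eq (2*K)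
      have hsub2 : t ⊆ (Finset.range (t.sup id + 1)).filter (fun j => X j ω ≠ X (j+1) ω) := by
        intro j hj
        refine Finset.mem_filter.mpr ⟨Finset.mem_range.mpr ?_, hts hj⟩
        have : j ≤ t.sup id := by simpa using Finset.le_sup (f := id) hj
        omega
      have hge : 2*K ≤ Z (t.sup id + 1) ω := by
        rw [hZ, ← htc]
        exact Finset.card_le_card hsub2
      exact absurd (hlt (t.sup id + 1)) (by omega)
    refine measure_mono_null hsub (measure_iUnion_null ?_)
    intro m
    have hle : ∀ t : ℕ, μ {ω | ∀ j, m ≤ j → X j ω = X (j+1) ω}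
        ≤ P true ^ (t+1) + P false ^ (t+1) := by
      intro t
      have hconst : ∀ ω, (∀ j, m ≤ j → X j ω = X (j+1) ω) → ∀ d, X (m+d) ω = X m ω := by
        intro ω hω d
        induction d with
        | zero => rfl
        | succ d ih =>
          have h1 := hω (m+d) (by omega)
          rw [show m + (d+1) = (m+d)+1 from rfl, ← h1, ih]
      have hsubset : {ω | ∀ j, m ≤ j → X j ω = X (j+1) ω}
          ⊆ (⋂ j ∈ Finset.Icc m (m+t), X j ⁻¹' {true})
            ∪ (⋂ j ∈ Finset.Icc m (m+t), X j ⁻¹' {false}) := by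
        intro ω hω
        have key : ∀ j, m ≤ j → X j ω = X m ω := by
          intro j hj
          rw [show j = m + (j - m) from by omega]
          exact hconst ω hω (j - m)
        rcases hb : X m ω
        · right
          simp only [Set.mem_iInter, Finset.mem_Icc, Set.mem_preimage, Set.mem_singleton_iff]
          rintro j ⟨hj1, hj2⟩
          rw [key j hj1, hb]
        · left
          simp only [Set.mem_iInter, Finset.mem_Icc, Set.mem_preimage, Set.mem_singleton_iff]
          rintro j ⟨hj1, hj2⟩
          rw [key j hj1, hb]
      refine le_trans (measure_mono hsubset) (le_trans (measure_union_le _ _) ?_)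
      have hprod : ∀ b : Bool, μ (⋂ j ∈ Finset.Icc m (m+t), X j ⁻¹' {b}) = P b ^ (t+1) := by
        intro b
        rw [hXindep.meas_biInter (fun j _ => ⟨{b}, MeasurableSpace.measurableSet_top, rfl⟩)]
        rw [Finset.prod_congr rfl (fun j _ => hXb j b), Finset.prod_const, Nat.card_Icc]
        congr 1
        omega
      rw [hprod true, hprod false]
    have h1 : P true < 1 := by
      rw [hPt, ← ENNReal.ofReal_one]
      exact (ENNReal.ofReal_lt_ofReal_iff (by norm_num)).mpr hp.2
    have h2 : P false < 1 := by
      rw [hPf, ← ENNReal.ofReal_one]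
      exact (ENNReal.ofReal_lt_ofReal_iff (by norm_num)).mpr (by linarith [hp.1])
    have htend : Filter.Tendsto (fun t : ℕ => P true ^ (t+1) + P false ^ (t+1))
        Filter.atTop (nhds 0) := by
      have g1 := (ENNReal.tendsto_pow_atTop_nhds_zero_of_lt_one h1).comp
        (Filter.tendsto_add_atTop_nat 1)
      have g2 := (ENNReal.tendsto_pow_atTop_nhds_zero_of_lt_one h2).comp
        (Filter.tendsto_add_atTop_nat 1)
      simpa using g1.add g2
    exact le_zero_iff.mp (ge_of_tendsto' htend hle)
  ----------------------------------------------------------------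
  -- main conclusion
  ----------------------------------------------------------------
  intro n
  rcases n with _ | m
  · rw [hLHS0, hRHS 0]
    obtain ⟨k0, hk0⟩ : ∃ k0, 2*K = k0 + 1 := ⟨2*K - 1, by omega⟩
    rw [hk0, ChgAux.D_succ']
    simp
  · -- characterization of the event {τ = m+1}
    have hτn : ∀ ω, τ ω = (m+1) ↔ (Z (m+1) ω = 2*K ∧ ¬ (X m ω = X (m+1) ω)) := by
      intro ω
      constructor
      · intro h
        have hne : {l : ℕ | 1 ≤ l ∧ Z l ω = 2*K}.Nonempty := by
          by_contra hc
          rw [Set.not_nonempty_iff_eq_empty] at hc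
          rw [hτ ω, hc] at h
          simp [Nat.sInf_empty] at h
        have hmem := Nat.sInf_mem hne
        rw [← hτ ω, h] at hmem
        obtain ⟨h1, h2⟩ := hmem
        refine ⟨h2, ?_⟩
        intro heq
        have hz := hZstep ω m
        rw [if_neg (by simpa using heq)] at hz
        have hm1 : 1 ≤ m := by
          rcases Nat.eq_zero_or_pos m with h0 | h0
          · exfalso
            subst h0
            rw [hZ0] at hz
            omega
          · exact h0
        have hmem2 : m ∈ {l : ℕ | 1 ≤ l ∧ Z l ω = 2*K} := ⟨hm1, by omega⟩
        have hle2 := Nat.sInf_le hmem2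
        rw [← hτ ω, h] at hle2
        omega
      · rintro ⟨h1, h2⟩
        rw [hτ ω]
        have hz := hZstep ω m
        rw [if_pos h2] at hz
        apply le_antisymm
        · exact Nat.sInf_le ⟨by omega, h1⟩
        · by_contra hlt
          push_neg at hlt
          have hne : {l : ℕ | 1 ≤ l ∧ Z l ω = 2*K}.Nonempty := ⟨m+1, by omega, h1⟩
          have hmem := Nat.sInf_mem hne
          obtain ⟨hh1, hh2⟩ := hmem
          have hlem : sInf {l : ℕ | 1 ≤ l ∧ Z l ω = 2*K} ≤ m := by omega
          have := hZm ω (sInf {l : ℕ | 1 ≤ l ∧ Z l ω = 2*K}) m hlem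
          omega
    -- link chg with Z
    have hchgZ : ∀ ω (n' : ℕ), ChgAux.chg (fun j : Fin (n'+1) => X j.val ω) = Z n' ω := by
      intro ω n'
      rw [hZ, Finset.card_filter]
      unfold ChgAux.chg
      rw [← Fin.sum_univ_eq_sum_range (fun j => if X j ω ≠ X (j+1) ω then 1 else 0) n']
      apply Finset.sum_congr rfl
      intro j _
      rfl
    have hE : ∀ ω, ω ∈ {ω | τ ω = (m+1)} ↔ (fun j : Fin (m+2) => X j.val ω) ∈
        Finset.univ.filter (fun w : Fin (m+2) → Bool => ChgAux.chg w = 2*K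
          ∧ ¬ (w ((Fin.last m).castSucc) = w (Fin.last (m+1)))) := by
      intro ω
      rw [Set.mem_setOf_eq, hτn ω, Finset.mem_filter]
      simp only [Finset.mem_univ, true_and]
      rw [hchgZ ω (m+1)]
      exact Iff.rfl
    have hmeas : ∀ (c : Fin (m+2) → Bool) (j : Fin (m+2)),
        MeasurableSet {ω | X j.val ω = c j} := by
      intro c j
      have : {ω | X j.val ω = c j} = X j.val ⁻¹' {c j} := by ext ω; simp
      rw [this]
      exact (hmX j.val) MeasurableSpace.measurableSet_top
    rw [ChgAux.meas_eq_sum_cylinders μ (fun (j : Fin (m+2)) ω => X j.val ω) _ _ hmeas hE]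
    have hcylX : ∀ (w : Fin (m+2) → Bool),
        μ (⋂ j : Fin (m+2), {ω | X j.val ω = w j}) = ChgAux.wt P w := by
      intro w
      have h1 : (⋂ j : Fin (m+2), {ω | X j.val ω = w j})
          = ⋂ j ∈ Finset.range (m+2), X j ⁻¹' {(if h : j < m+2 then w ⟨j, h⟩ else true)} := by
        ext ω
        simp only [Set.mem_iInter, Set.mem_setOf_eq, Set.mem_preimage, Set.mem_singleton_iff,
          Finset.mem_range]
        constructor
        · intro h j hj
          rw [dif_pos hj]
          exact h ⟨j, hj⟩
        · intro h j
          have := h j.val j.isLt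
          rw [dif_pos j.isLt] at this
          simpa using this
      rw [h1, hXindep.meas_biInter (fun j _ => ⟨{(if h : j < m+2 then w ⟨j, h⟩ else true)},
        MeasurableSpace.measurableSet_top, rfl⟩)]
      unfold ChgAux.wt
      rw [← Fin.prod_univ_eq_prod_range
        (fun j => μ (X j ⁻¹' {(if h : j < m+2 then w ⟨j, h⟩ else true)})) (m+2)]
      apply Finset.prod_congr rfl
      intro j _
      rw [hXb]
      congr 1
      rw [dif_pos j.isLt]
    rw [Finset.sum_congr rfl (fun w _ => hcylX w)]
    rw [Finset.sum_filter]
    obtain ⟨k0, hk0⟩ : ∃ k0, 2*K = k0 + 1 := ⟨2*K - 1, by omega⟩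
    rw [hk0, ChgAux.wordsum_tau P m k0, ← hk0, ChgAux.D_two_sym P K (m+1),
      ← add_mul, hPsum, one_mul, hRHS (m+1)]
end

section
/- Let θ ≥ 1 and F ≥ 2θ + 2 be integers, let ρ_1, ρ_2 > 0 satisfy 2ρ_1 + (F − 2)ρ_2 = 1, and let η, η′ be independent random variables with values in {1, …, F} such that P(η = 1) = P(η = F) = ρ_1 and P(η = i) = ρ_2 for 2 ≤ i ≤ F − 1, and the same for η′. Set ξ := η′ − η and define φ := −|ξ| if |ξ| ≤ θ and φ := |ξ| − 2θ if |ξ| > θ. Then E φ = (1/3) Q(ρ_1, ρ_2), where Q(X, Y) := −6Y(2X + (F − θ − 2)Y)θ² + Y(6X + (F − 2θ − 3)Y)(F − 2θ − 2)(F − 2θ − 1) + 6X²(F − 2θ − 1). -/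
open Finset

lemma tri_reindex {M : Type*} [AddCommMonoid M] (F : ℕ) (h : ℕ → ℕ → M) :
    ∑ i ∈ Finset.Icc 1 F, ∑ j ∈ Finset.Ioc i F, h i j
      = ∑ d ∈ Finset.Icc 1 (F - 1), ∑ i ∈ Finset.Icc 1 (F - d), h i (i + d) := by
  rw [Finset.sum_sigma', Finset.sum_sigma']
  refine Finset.sum_nbij' (fun x => ⟨x.2 - x.1, x.1⟩) (fun x => ⟨x.2, x.2 + x.1⟩) ?_ ?_ ?_ ?_ ?_
  · rintro ⟨i, j⟩ hm
    simp only [Finset.mem_sigma, Finset.mem_Icc, Finset.mem_Ioc] at hm ⊢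
    omega
  · rintro ⟨d, i⟩ hm
    simp only [Finset.mem_sigma, Finset.mem_Icc, Finset.mem_Ioc] at hm ⊢
    omega
  · rintro ⟨i, j⟩ hm
    simp only [Finset.mem_sigma, Finset.mem_Icc, Finset.mem_Ioc] at hm
    have hj : i + (j - i) = j := by omega
    simp only [hj]
  · rintro ⟨d, i⟩ hm
    simp only [Finset.mem_sigma, Finset.mem_Icc, Finset.mem_Ioc] at hm
    have hd : i + d - i = d := by omega
    simp only [hd]
  · rintro ⟨i, j⟩ hm
    simp only [Finset.mem_sigma, Finset.mem_Icc, Finset.mem_Ioc] at hm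
    have hj : i + (j - i) = j := by omega
    simp only [hj]

lemma tri_swap {M : Type*} [AddCommMonoid M] (F : ℕ) (h : ℕ → ℕ → M) :
    ∑ i ∈ Finset.Icc 1 F, ∑ j ∈ Finset.Ico 1 i, h i j
      = ∑ j ∈ Finset.Icc 1 F, ∑ i ∈ Finset.Ioc j F, h i j := by
  rw [Finset.sum_sigma', Finset.sum_sigma']
  refine Finset.sum_nbij' (fun x => ⟨x.2, x.1⟩) (fun x => ⟨x.2, x.1⟩) ?_ ?_ ?_ ?_ ?_
  · rintro ⟨i, j⟩ hm
    simp only [Finset.mem_sigma, Finset.mem_Icc, Finset.mem_Ioc, Finset.mem_Ico] at hm ⊢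
    omega
  · rintro ⟨j, i⟩ hm
    simp only [Finset.mem_sigma, Finset.mem_Icc, Finset.mem_Ioc, Finset.mem_Ico] at hm ⊢
    omega
  · rintro ⟨i, j⟩ _; rfl
  · rintro ⟨j, i⟩ _; rfl
  · rintro ⟨i, j⟩ _; rfl

lemma alg_sum (θ F : ℕ) (hθ : 1 ≤ θ) (hF : 2*θ+2 ≤ F) (ρ1 ρ2 : ℝ)
    (w : ℕ → ℝ) (hw1 : w 1 = ρ1) (hwF : w F = ρ1)
    (hwm : ∀ i, 2 ≤ i → i ≤ F - 1 → w i = ρ2) :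
    ∑ i ∈ Finset.Icc 1 F, ∑ j ∈ Finset.Icc 1 F,
      w i * w j * (if (((j:ℤ)-(i:ℤ)).natAbs) ≤ θ then -(((((j:ℤ)-(i:ℤ)).natAbs) : ℕ):ℝ)
        else (((((j:ℤ)-(i:ℤ)).natAbs) : ℕ):ℝ) - 2*(θ:ℝ))
    = (1/3) * (-6*ρ2*(2*ρ1 + ((F:ℝ)-θ-2)*ρ2)*θ^2
        + ρ2*(6*ρ1 + ((F:ℝ)-2*θ-3)*ρ2)*((F:ℝ)-2*θ-2)*((F:ℝ)-2*θ-1)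
        + 6*ρ1^2*((F:ℝ)-2*θ-1)) := by
  set h : ℕ → ℕ → ℝ := fun i j =>
    w i * w j * (if (((j:ℤ)-(i:ℤ)).natAbs) ≤ θ then -(((((j:ℤ)-(i:ℤ)).natAbs) : ℕ):ℝ)
      else (((((j:ℤ)-(i:ℤ)).natAbs) : ℕ):ℝ) - 2*(θ:ℝ)) with hh
  have hdiag : ∀ i, h i i = 0 := by
    intro i
    simp [hh]
  have hsym : ∀ i j, h i j = h j i := by
    intro i j
    simp only [hh]
    rw [show ((i:ℤ)-(j:ℤ)).natAbs = ((j:ℤ)-(i:ℤ)).natAbs from by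
      rw [← neg_sub ((j:ℤ)) ((i:ℤ)), Int.natAbs_neg]]
    ring
  -- split each inner sum into strict lower / diagonal / strict upper parts
  have hsplit : ∑ i ∈ Finset.Icc 1 F, ∑ j ∈ Finset.Icc 1 F, h i j
      = (∑ i ∈ Finset.Icc 1 F, ∑ j ∈ Finset.Ico 1 i, h i j)
        + ∑ i ∈ Finset.Icc 1 F, ∑ j ∈ Finset.Ioc i F, h i j := by
    rw [← Finset.sum_add_distrib]
    refine Finset.sum_congr rfl (fun i hi => ?_)
    simp only [mem_Icc] at hi
    rw [← Finset.Ico_add_one_right_eq_Icc 1 F,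
      ← Finset.sum_Ico_consecutive _ (by omega : 1 ≤ i) (by omega : i ≤ F + 1)]
    congr 1
    rw [Finset.sum_eq_sum_Ico_succ_bot (by omega), hdiag, zero_add,
      Finset.Ico_add_one_right_eq_Icc, Finset.Icc_add_one_left_eq_Ioc]
  set T := ∑ d ∈ Finset.Icc 1 (F-1), ∑ i ∈ Finset.Icc 1 (F-d), h i (i+d) with hT
  have e2 : (∑ i ∈ Finset.Icc 1 F, ∑ j ∈ Finset.Ioc i F, h i j) = T := tri_reindex F h
  have e1 : (∑ i ∈ Finset.Icc 1 F, ∑ j ∈ Finset.Ico 1 i, h i j) = T := by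
    rw [tri_swap F h]
    have e := tri_reindex F (fun a b => h b a)
    rw [e]
    exact Finset.sum_congr rfl fun d _ => Finset.sum_congr rfl fun i _ => hsym (i+d) i
  rw [hsplit, e1, e2]
  -- now compute T
  clear hsplit e1 e2 hdiag hsym
  have hgd : ∀ d i, h i (i+d)
      = w i * w (i+d) * (if d ≤ θ then -(d:ℝ) else (d:ℝ) - 2*(θ:ℝ)) := by
    intro d i
    simp only [hh]
    rw [show (((i+d:ℕ):ℤ) - (i:ℤ)).natAbs = d from by
      rw [show ((i+d:ℕ):ℤ) - (i:ℤ) = (d:ℤ) from by push_cast; ring, Int.natAbs_natCast]]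
  have hTmul : T = ∑ d ∈ Finset.Icc 1 (F-1),
      (∑ i ∈ Finset.Icc 1 (F-d), w i * w (i+d))
        * (if d ≤ θ then -(d:ℝ) else (d:ℝ) - 2*(θ:ℝ)) := by
    refine Finset.sum_congr rfl fun d _ => ?_
    rw [Finset.sum_mul]
    exact Finset.sum_congr rfl fun i _ => hgd d i
  -- inner sums for 1 ≤ d ≤ F-2
  have hinner : ∀ d ∈ Finset.Icc 1 (F-2), ∑ i ∈ Finset.Icc 1 (F - d), w i * w (i + d)
      = 2*ρ1*ρ2 + ((F:ℝ)-(d:ℝ)-2)*ρ2^2 := by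
    intro d hd
    simp only [mem_Icc] at hd
    rw [← Finset.Ico_add_one_right_eq_Icc 1 (F-d), Finset.sum_eq_sum_Ico_succ_bot (by omega),
      Finset.Ico_add_one_right_eq_Icc]
    have htop : F - d = (F - d - 1) + 1 := by omega
    rw [htop, Finset.sum_Icc_succ_top (by omega)]
    have hmid : ∑ i ∈ Finset.Icc 2 (F - d - 1), w i * w (i + d)
        = ((F - d - 2 : ℕ) : ℝ) * ρ2^2 := by
      rw [Finset.sum_congr rfl (fun i hi => ?_), Finset.sum_const, Nat.card_Icc,
        nsmul_eq_mul]
      · have h2 : F - d - 1 + 1 - 2 = F - d - 2 := by omega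
        rw [h2]
      · simp only [mem_Icc] at hi
        rw [hwm i (by omega) (by omega), hwm (i+d) (by omega) (by omega), sq]
    rw [hmid, hw1, hwm (1+d) (by omega) (by omega), hwm ((F-d-1)+1) (by omega) (by omega)]
    rw [show (F - d - 1) + 1 + d = F from by omega, hwF,
      Nat.cast_sub (by omega), Nat.cast_sub (by omega)]
    push_cast
    ring
  -- closed form for the truncated d-sum, part 1 (d ≤ θ)
  have hA : ∀ t, t ≤ θ → ∑ d ∈ Finset.Icc 1 t,
        (2*ρ1*ρ2 + ((F:ℝ)-(d:ℝ)-2)*ρ2^2) * (if d ≤ θ then -(d:ℝ) else (d:ℝ) - 2*(θ:ℝ))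
      = -((2*ρ1*ρ2 + ((F:ℝ)-2)*ρ2^2) * ((t:ℝ)*((t:ℝ)+1)/2))
          + ρ2^2 * ((t:ℝ)*((t:ℝ)+1)*(2*(t:ℝ)+1)/6) := by
    intro t
    induction t with
    | zero => intro _; simp
    | succ t ih =>
      intro ht
      rw [Finset.sum_Icc_succ_top (by omega), ih (by omega), if_pos (by omega)]
      push_cast
      ring
  -- closed form, part 2 (θ ≤ t)
  have hB : ∀ t, θ ≤ t → ∑ d ∈ Finset.Icc 1 t,
        (2*ρ1*ρ2 + ((F:ℝ)-(d:ℝ)-2)*ρ2^2) * (if d ≤ θ then -(d:ℝ) else (d:ℝ) - 2*(θ:ℝ))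
      = (-((2*ρ1*ρ2 + ((F:ℝ)-2)*ρ2^2) * ((θ:ℝ)*((θ:ℝ)+1)/2))
          + ρ2^2 * ((θ:ℝ)*((θ:ℝ)+1)*(2*(θ:ℝ)+1)/6))
        + (2*ρ1*ρ2 + ((F:ℝ)-2)*ρ2^2)
            * (((t:ℝ)*((t:ℝ)+1) - (θ:ℝ)*((θ:ℝ)+1))/2 - 2*(θ:ℝ)*((t:ℝ)-(θ:ℝ)))
        - ρ2^2 * (((t:ℝ)*((t:ℝ)+1)*(2*(t:ℝ)+1) - (θ:ℝ)*((θ:ℝ)+1)*(2*(θ:ℝ)+1))/6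
            - 2*(θ:ℝ)*(((t:ℝ)*((t:ℝ)+1) - (θ:ℝ)*((θ:ℝ)+1))/2)) := by
    intro t ht
    induction t, ht using Nat.le_induction with
    | base => rw [hA θ le_rfl]; ring
    | succ t ht ih =>
      rw [Finset.sum_Icc_succ_top (by omega), ih, if_neg (by omega)]
      push_cast
      ring
  -- split off the top term d = F - 1 and conclude
  have hcongr : ∑ d ∈ Finset.Icc 1 (F-2),
      (∑ i ∈ Finset.Icc 1 (F-d), w i * w (i+d))
        * (if d ≤ θ then -(d:ℝ) else (d:ℝ) - 2*(θ:ℝ))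
      = ∑ d ∈ Finset.Icc 1 (F-2),
        (2*ρ1*ρ2 + ((F:ℝ)-(d:ℝ)-2)*ρ2^2) * (if d ≤ θ then -(d:ℝ) else (d:ℝ) - 2*(θ:ℝ)) :=
    Finset.sum_congr rfl fun d hd => by rw [hinner d hd]
  rw [hTmul, show F - 1 = (F-2)+1 from by omega, Finset.sum_Icc_succ_top (by omega),
    hcongr, hB (F-2) (by omega)]
  rw [show F - (F-2+1) = 1 from by omega, Finset.Icc_self, Finset.sum_singleton,
    show 1 + (F-2+1) = F from by omega, hw1, hwF, if_neg (by omega)]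
  have c1 : ((F-2 : ℕ):ℝ) = (F:ℝ) - 2 := by
    rw [Nat.cast_sub (by omega)]
    norm_num
  rw [Nat.cast_add, Nat.cast_one, c1]
  ring

open MeasureTheory ProbabilityTheory

/-- Expected value of the edge weight `φ` for the constrained voter model with `F` opinions
and confidence threshold `θ`, when the two endpoints are independent with the symmetric
distribution `ρ₁` on `{1, F}` and `ρ₂` on `{2, ..., F-1}`:
`E φ = (1/3) Q(ρ₁, ρ₂)` where
`Q(X, Y) = -6Y(2X + (F-θ-2)Y)θ² + Y(6X + (F-2θ-3)Y)(F-2θ-2)(F-2θ-1) + 6X²(F-2θ-1)`. -/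
theorem expected_weight_eq
    {Ω : Type*} [MeasurableSpace Ω] (μ : Measure Ω) [IsProbabilityMeasure μ]
    (θ F : ℕ) (hθ : 1 ≤ θ) (hF : 2 * θ + 2 ≤ F)
    (ρ1 ρ2 : ℝ) (hρ1 : 0 < ρ1) (hρ2 : 0 < ρ2)
    (hsum : 2 * ρ1 + ((F : ℝ) - 2) * ρ2 = 1)
    (η η' : Ω → ℕ)
    (hmη : Measurable η) (hmη' : Measurable η')
    (hval : ∀ ω, η ω ∈ Finset.Icc 1 F) (hval' : ∀ ω, η' ω ∈ Finset.Icc 1 F)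
    (hindep : IndepFun η η' μ)
    (hd1 : μ {ω | η ω = 1} = ENNReal.ofReal ρ1)
    (hdF : μ {ω | η ω = F} = ENNReal.ofReal ρ1)
    (hdmid : ∀ i, 2 ≤ i → i ≤ F - 1 → μ {ω | η ω = i} = ENNReal.ofReal ρ2)
    (hd1' : μ {ω | η' ω = 1} = ENNReal.ofReal ρ1)
    (hdF' : μ {ω | η' ω = F} = ENNReal.ofReal ρ1)
    (hdmid' : ∀ i, 2 ≤ i → i ≤ F - 1 → μ {ω | η' ω = i} = ENNReal.ofReal ρ2) :
    (∫ ω, (if |(η' ω : ℤ) - (η ω : ℤ)| ≤ (θ : ℤ)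
        then -((|(η' ω : ℤ) - (η ω : ℤ)| : ℤ) : ℝ)
        else ((|(η' ω : ℤ) - (η ω : ℤ)| : ℤ) : ℝ) - 2 * θ) ∂μ)
      = (1 / 3) * (-6 * ρ2 * (2 * ρ1 + ((F : ℝ) - θ - 2) * ρ2) * θ ^ 2
          + ρ2 * (6 * ρ1 + ((F : ℝ) - 2 * θ - 3) * ρ2)
              * ((F : ℝ) - 2 * θ - 2) * ((F : ℝ) - 2 * θ - 1)
          + 6 * ρ1 ^ 2 * ((F : ℝ) - 2 * θ - 1)) := by
  classical
  set f : ℕ → ℕ → ℝ := fun i j =>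
    if (((j:ℤ)-(i:ℤ)).natAbs) ≤ θ then -(((((j:ℤ)-(i:ℤ)).natAbs) : ℕ):ℝ)
      else (((((j:ℤ)-(i:ℤ)).natAbs) : ℕ):ℝ) - 2*(θ:ℝ) with hf
  set w : ℕ → ℝ := fun i => if i = 1 ∨ i = F then ρ1 else ρ2 with hwdef
  -- the integrand as a function of the values of η and η'
  have e1 : ∀ ω, (if |(η' ω : ℤ) - (η ω : ℤ)| ≤ (θ : ℤ)
      then -((|(η' ω : ℤ) - (η ω : ℤ)| : ℤ) : ℝ)
      else ((|(η' ω : ℤ) - (η ω : ℤ)| : ℤ) : ℝ) - 2 * θ) = f (η ω) (η' ω) := by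
    intro ω
    simp only [hf, Int.abs_eq_natAbs, Nat.cast_le, Int.cast_natCast]
  -- expand into a finite sum of indicators
  have key : ∀ ω, f (η ω) (η' ω)
      = ∑ p ∈ Finset.Icc 1 F ×ˢ Finset.Icc 1 F,
          Set.indicator ((η ⁻¹' {p.1}) ∩ (η' ⁻¹' {p.2})) (fun _ => f p.1 p.2) ω := by
    intro ω
    have hip : ∀ (i j : ℕ),
        Set.indicator ((η ⁻¹' {i}) ∩ (η' ⁻¹' {j})) (fun _ => f i j) ω
          = if η ω = i ∧ η' ω = j then f i j else 0 := by
      intro i j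
      simp only [Set.indicator_apply, Set.mem_inter_iff, Set.mem_preimage,
        Set.mem_singleton_iff]
    rw [Finset.sum_congr rfl (fun p _ => hip p.1 p.2),
      Finset.sum_eq_single_of_mem (η ω, η' ω) (Finset.mem_product.2 ⟨hval ω, hval' ω⟩)
        (fun b _ hb => if_neg (by
          rintro ⟨h1, h2⟩; exact hb (Prod.ext h1.symm h2.symm)))]
    rw [if_pos ⟨rfl, rfl⟩]
  -- measurability of the elementary events
  have hms : ∀ (p : ℕ × ℕ), MeasurableSet ((η ⁻¹' {p.1}) ∩ (η' ⁻¹' {p.2})) :=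
    fun p => (hmη (measurableSet_singleton p.1)).inter (hmη' (measurableSet_singleton p.2))
  -- compute the integral
  have e2 : (∫ ω, (if |(η' ω : ℤ) - (η ω : ℤ)| ≤ (θ : ℤ)
      then -((|(η' ω : ℤ) - (η ω : ℤ)| : ℤ) : ℝ)
      else ((|(η' ω : ℤ) - (η ω : ℤ)| : ℤ) : ℝ) - 2 * θ) ∂μ)
      = ∑ p ∈ Finset.Icc 1 F ×ˢ Finset.Icc 1 F,
          (μ ((η ⁻¹' {p.1}) ∩ (η' ⁻¹' {p.2}))).toReal * f p.1 p.2 := by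
    rw [integral_congr_ae (Filter.Eventually.of_forall fun ω => (e1 ω).trans (key ω))]
    rw [integral_finset_sum _ (fun p _ => (integrable_indicator_iff (hms p)).2
      (integrableOn_const))]
    exact Finset.sum_congr rfl fun p _ => by
      rw [integral_indicator_const _ (hms p), smul_eq_mul, measureReal_def]
  rw [e2]
  -- marginal probabilities
  have hw1 : w 1 = ρ1 := by simp [hwdef]
  have hwFv : w F = ρ1 := by simp [hwdef]
  have hwm : ∀ i, 2 ≤ i → i ≤ F - 1 → w i = ρ2 := by
    intro i h2 h3
    simp only [hwdef]
    exact if_neg (by omega)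
  have hwη : ∀ i ∈ Finset.Icc 1 F, μ (η ⁻¹' {i}) = ENNReal.ofReal (w i) := by
    intro i hi
    simp only [Finset.mem_Icc] at hi
    by_cases h1 : i = 1
    · subst h1; rw [hw1]; exact hd1
    by_cases h2 : i = F
    · rw [h2, hwFv]; exact hdF
    · rw [hwm i (by omega) (by omega)]
      exact hdmid i (by omega) (by omega)
  have hwη' : ∀ i ∈ Finset.Icc 1 F, μ (η' ⁻¹' {i}) = ENNReal.ofReal (w i) := by
    intro i hi
    simp only [Finset.mem_Icc] at hi
    by_cases h1 : i = 1
    · subst h1; rw [hw1]; exact hd1'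
    by_cases h2 : i = F
    · rw [h2, hwFv]; exact hdF'
    · rw [hwm i (by omega) (by omega)]
      exact hdmid' i (by omega) (by omega)
  have hwpos : ∀ i, 0 ≤ w i := by
    intro i
    rw [hwdef]
    simp only []
    split <;> positivity
  have e3 : ∀ p ∈ Finset.Icc 1 F ×ˢ Finset.Icc 1 F,
      (μ ((η ⁻¹' {p.1}) ∩ (η' ⁻¹' {p.2}))).toReal * f p.1 p.2
        = w p.1 * w p.2 * f p.1 p.2 := by
    intro p hp
    rw [Finset.mem_product] at hp
    rw [hindep.measure_inter_preimage_eq_mul {p.1} {p.2}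
        (measurableSet_singleton p.1) (measurableSet_singleton p.2),
      hwη p.1 hp.1, hwη' p.2 hp.2, ENNReal.toReal_mul,
      ENNReal.toReal_ofReal (hwpos p.1), ENNReal.toReal_ofReal (hwpos p.2)]
  rw [Finset.sum_congr rfl e3, Finset.sum_product]
  exact alg_sum θ F hθ hF ρ1 ρ2 w hw1 hwFv hwm
end

section
/- Let θ ≥ 1 and F ≥ 2θ + 2 be integers, and let η, η′ be independent random variables each uniformly distributed on {1, …, F}. Set ξ := η′ − η and define φ := −|ξ| if |ξ| ≤ θ and φ := |ξ| − 2θ if |ξ| > θ. Then E φ = (1/(3F²)) (−6(F − θ)θ² + (F − 2θ − 1)(F − 2θ)(F − 2θ + 1)). -/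
open MeasureTheory ProbabilityTheory

lemma gauss' (F : ℕ) : 2 * ∑ i ∈ Finset.Icc 1 F, (i:ℤ) = F * (F+1) := by
  induction F with
  | zero => simp
  | succ n ih =>
    rw [Finset.sum_Icc_succ_top (by omega)]
    push_cast; push_cast at ih; linarith

lemma sumT1 (F : ℕ) :
    3 * ∑ i ∈ Finset.Icc 1 F, ∑ j ∈ Finset.Icc 1 F, |(j:ℤ) - (i:ℤ)| = (F:ℤ)^3 - F := by
  induction F with
  | zero => simp
  | succ n ih =>
    have hle : 1 ≤ n+1 := by omega
    rw [Finset.sum_Icc_succ_top hle]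
    simp_rw [Finset.sum_Icc_succ_top hle]
    rw [Finset.sum_add_distrib]
    have habs : ∀ i ∈ Finset.Icc 1 n, |((n+1:ℕ):ℤ) - (i:ℤ)| = ((n:ℤ)+1) - i := by
      intro i hi
      simp only [Finset.mem_Icc] at hi
      rw [abs_of_nonneg (by push_cast; omega)]
      push_cast; ring
    have habs2 : ∀ j ∈ Finset.Icc 1 n, |(j:ℤ) - ((n+1:ℕ):ℤ)| = ((n:ℤ)+1) - j := by
      intro j hj
      simp only [Finset.mem_Icc] at hj
      rw [abs_of_nonpos (by push_cast; omega)]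
      push_cast; ring
    rw [Finset.sum_congr rfl habs, Finset.sum_congr rfl habs2,
      Finset.sum_sub_distrib, Finset.sum_const, Nat.card_Icc]
    have hg := gauss' n
    simp only [sub_self, abs_zero, nsmul_eq_mul]
    push_cast
    push_cast at ih
    nlinarith [hg]

lemma reflect' (F : ℕ) (f : ℕ → ℤ) :
    ∑ i ∈ Finset.Icc 1 F, f (F+1-i) = ∑ i ∈ Finset.Icc 1 F, f i := by
  refine Finset.sum_nbij' (fun i => F+1-i) (fun i => F+1-i) ?_ ?_ ?_ ?_ ?_ <;>
    simp only [Finset.mem_Icc] <;> intro a ha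
  all_goals first | omega | trivial

lemma sumMin' (θ F : ℕ) (h : θ ≤ F) :
    2 * ∑ k ∈ Finset.Icc 1 F, min (k:ℤ) (θ:ℤ) = θ*(θ+1) + 2*θ*((F:ℤ)-θ) := by
  induction F, h using Nat.le_induction with
  | base =>
    have h1 : ∑ k ∈ Finset.Icc 1 θ, min (k:ℤ) (θ:ℤ) = ∑ k ∈ Finset.Icc 1 θ, (k:ℤ) := by
      refine Finset.sum_congr rfl fun k hk => ?_
      simp only [Finset.mem_Icc] at hk
      exact min_eq_left (by exact_mod_cast hk.2)
    rw [h1, gauss']; ring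
  | succ n hn ih =>
    rw [Finset.sum_Icc_succ_top (by omega)]
    have h2 : min (((n:ℕ)+1 : ℕ):ℤ) (θ:ℤ) = θ :=
      min_eq_right (by exact_mod_cast Nat.le_succ_of_le hn)
    rw [mul_add, h2]
    push_cast; push_cast at ih; linarith

lemma sumT2 (θ F : ℕ) (h : θ ≤ F) :
    3 * ∑ i ∈ Finset.Icc 1 F, ∑ j ∈ Finset.Icc 1 F, min |(j:ℤ) - (i:ℤ)| (θ:ℤ)
      = 3*F*θ*(θ+1) - θ*(θ+1)*(2*θ+1) + 3*θ*((F:ℤ)-θ)*((F:ℤ)-θ-1) := by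
  induction F, h using Nat.le_induction with
  | base =>
    have h1 : ∀ i ∈ Finset.Icc 1 θ, ∀ j ∈ Finset.Icc 1 θ,
        min |(j:ℤ) - (i:ℤ)| (θ:ℤ) = |(j:ℤ) - (i:ℤ)| := by
      intro i hi j hj
      simp only [Finset.mem_Icc] at hi hj
      refine min_eq_left ?_
      rw [abs_sub_le_iff]
      constructor <;> push_cast <;> omega
    have h2 : ∑ i ∈ Finset.Icc 1 θ, ∑ j ∈ Finset.Icc 1 θ, min |(j:ℤ) - (i:ℤ)| (θ:ℤ)
        = ∑ i ∈ Finset.Icc 1 θ, ∑ j ∈ Finset.Icc 1 θ, |(j:ℤ) - (i:ℤ)| :=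
      Finset.sum_congr rfl fun i hi => Finset.sum_congr rfl fun j hj => h1 i hi j hj
    rw [h2, sumT1]; ring
  | succ n hn ih =>
    have hle : 1 ≤ n+1 := by omega
    rw [Finset.sum_Icc_succ_top hle]
    simp_rw [Finset.sum_Icc_succ_top hle]
    rw [Finset.sum_add_distrib]
    have key : ∀ g : ℕ → ℤ, (∀ i ∈ Finset.Icc 1 n, g i = min ((n+1-i : ℕ):ℤ) (θ:ℤ)) →
        2 * ∑ i ∈ Finset.Icc 1 n, g i = θ*(θ+1) + 2*θ*((n:ℤ)-θ) := by
      intro g hg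
      rw [Finset.sum_congr rfl hg]
      rw [show (∑ i ∈ Finset.Icc 1 n, min ((n+1-i : ℕ):ℤ) (θ:ℤ))
          = ∑ i ∈ Finset.Icc 1 n, (fun k => min ((k:ℕ):ℤ) (θ:ℤ)) (n+1-i) from rfl]
      rw [reflect' n (fun k => min ((k:ℕ):ℤ) (θ:ℤ))]
      exact sumMin' θ n hn
    have k1 := key (fun i => min |((n+1:ℕ):ℤ) - (i:ℤ)| (θ:ℤ)) (by
      intro i hi
      simp only [Finset.mem_Icc] at hi
      congr 1
      rw [abs_of_nonneg (by push_cast; omega)]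
      push_cast [Nat.cast_sub (by omega : i ≤ n+1)]; ring)
    have k2 := key (fun j => min |(j:ℤ) - ((n+1:ℕ):ℤ)| (θ:ℤ)) (by
      intro j hj
      simp only [Finset.mem_Icc] at hj
      congr 1
      rw [abs_of_nonpos (by push_cast; omega), neg_sub]
      push_cast [Nat.cast_sub (by omega : j ≤ n+1)]; ring)
    simp only [sub_self, abs_zero] at *
    have h0 : min (0:ℤ) (θ:ℤ) = 0 := min_eq_left (by positivity)
    rw [h0]
    push_cast at ih k1 k2 ⊢
    linarith

/-- Expected value of the edge weight `φ` for the constrained voter model with `F` opinions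
and confidence threshold `θ` in the uniform case: if the two endpoints are independent and
uniform on `{1, ..., F}`, then
`E φ = (1/(3F²)) (-6(F-θ)θ² + (F-2θ-1)(F-2θ)(F-2θ+1))`. -/
theorem expected_weight_uniform_eq
    {Ω : Type*} [MeasurableSpace Ω] (μ : Measure Ω) [IsProbabilityMeasure μ]
    (θ F : ℕ) (hθ : 1 ≤ θ) (hF : 2 * θ + 2 ≤ F)
    (η η' : Ω → ℕ)
    (hmη : Measurable η) (hmη' : Measurable η')
    (hval : ∀ ω, η ω ∈ Finset.Icc 1 F) (hval' : ∀ ω, η' ω ∈ Finset.Icc 1 F)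
    (hindep : IndepFun η η' μ)
    (hdist : ∀ i ∈ Finset.Icc 1 F, μ {ω | η ω = i} = ENNReal.ofReal (1 / F))
    (hdist' : ∀ i ∈ Finset.Icc 1 F, μ {ω | η' ω = i} = ENNReal.ofReal (1 / F)) :
    (∫ ω, (if |(η' ω : ℤ) - (η ω : ℤ)| ≤ (θ : ℤ)
        then -((|(η' ω : ℤ) - (η ω : ℤ)| : ℤ) : ℝ)
        else ((|(η' ω : ℤ) - (η ω : ℤ)| : ℤ) : ℝ) - 2 * θ) ∂μ)
      = (1 / (3 * (F : ℝ) ^ 2))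
          * (-6 * ((F : ℝ) - θ) * θ ^ 2
              + ((F : ℝ) - 2 * θ - 1) * ((F : ℝ) - 2 * θ) * ((F : ℝ) - 2 * θ + 1)) := by
  have hθF : θ ≤ F := by omega
  have hFpos : (0:ℝ) < (F:ℝ) := by exact_mod_cast (by omega : 0 < F)
  set g : ℕ → ℕ → ℝ := fun i j =>
    if |(j:ℤ) - (i:ℤ)| ≤ (θ:ℤ) then -((|(j:ℤ) - (i:ℤ)| : ℤ) : ℝ)
    else ((|(j:ℤ) - (i:ℤ)| : ℤ) : ℝ) - 2*θ with hg
  set S := (Finset.Icc 1 F) ×ˢ (Finset.Icc 1 F) with hS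
  set A : ℕ × ℕ → Set Ω := fun p => (η ⁻¹' {p.1}) ∩ (η' ⁻¹' {p.2}) with hA
  have hAmeas : ∀ p : ℕ × ℕ, MeasurableSet (A p) := fun p =>
    (hmη (measurableSet_singleton p.1)).inter (hmη' (measurableSet_singleton p.2))
  have hfun : ∀ ω, (if |(η' ω : ℤ) - (η ω : ℤ)| ≤ (θ : ℤ)
        then -((|(η' ω : ℤ) - (η ω : ℤ)| : ℤ) : ℝ)
        else ((|(η' ω : ℤ) - (η ω : ℤ)| : ℤ) : ℝ) - 2 * θ)
      = ∑ p ∈ S, (A p).indicator (fun _ => g p.1 p.2) ω := by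
    intro ω
    rw [Finset.sum_eq_single_of_mem (η ω, η' ω)
      (Finset.mem_product.mpr ⟨hval ω, hval' ω⟩)]
    · rw [Set.indicator_of_mem (show ω ∈ A (η ω, η' ω) from ⟨rfl, rfl⟩), hg]
    · intro p hp hne
      apply Set.indicator_of_notMem
      rintro ⟨h1, h2⟩
      exact hne (Prod.ext h1.symm h2.symm)
  have hμA : ∀ p ∈ S, (μ (A p)).toReal = (1/(F:ℝ)) * (1/(F:ℝ)) := by
    intro p hp
    rw [Finset.mem_product] at hp
    have := hindep.measure_inter_preimage_eq_mul {p.1} {p.2}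
      (measurableSet_singleton _) (measurableSet_singleton _)
    rw [hA]
    dsimp only
    rw [this, show η ⁻¹' {p.1} = {ω | η ω = p.1} from rfl,
      show η' ⁻¹' {p.2} = {ω | η' ω = p.2} from rfl, hdist p.1 hp.1, hdist' p.2 hp.2,
      ← ENNReal.ofReal_mul (by positivity), ENNReal.toReal_ofReal (by positivity)]
  calc (∫ ω, (if |(η' ω : ℤ) - (η ω : ℤ)| ≤ (θ : ℤ)
        then -((|(η' ω : ℤ) - (η ω : ℤ)| : ℤ) : ℝ)
        else ((|(η' ω : ℤ) - (η ω : ℤ)| : ℤ) : ℝ) - 2 * θ) ∂μ)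
      = ∫ ω, ∑ p ∈ S, (A p).indicator (fun _ => g p.1 p.2) ω ∂μ := by
        exact integral_congr_ae (Filter.Eventually.of_forall hfun)
    _ = ∑ p ∈ S, ∫ ω, (A p).indicator (fun _ => g p.1 p.2) ω ∂μ :=
        integral_finset_sum S fun p _ => (integrable_const _).indicator (hAmeas p)
    _ = ∑ p ∈ S, (μ (A p)).toReal • g p.1 p.2 :=
        Finset.sum_congr rfl fun p _ => integral_indicator_const _ (hAmeas p)
    _ = ∑ p ∈ S, ((1/(F:ℝ)) * (1/(F:ℝ))) * g p.1 p.2 :=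
        Finset.sum_congr rfl fun p hp => by rw [hμA p hp, smul_eq_mul]
    _ = ((1/(F:ℝ)) * (1/(F:ℝ))) * ∑ p ∈ S, g p.1 p.2 := by rw [Finset.mul_sum]
    _ = ((1/(F:ℝ)) * (1/(F:ℝ))) * ∑ i ∈ Finset.Icc 1 F, ∑ j ∈ Finset.Icc 1 F, g i j := by
        rw [hS, Finset.sum_product]
    _ = (1 / (3 * (F : ℝ) ^ 2))
          * (-6 * ((F : ℝ) - θ) * θ ^ 2
              + ((F : ℝ) - 2 * θ - 1) * ((F : ℝ) - 2 * θ) * ((F : ℝ) - 2 * θ + 1)) := by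
        have ptw : ∀ i j : ℕ, g i j
            = ((|(j:ℤ) - (i:ℤ)| - 2 * min |(j:ℤ) - (i:ℤ)| (θ:ℤ) : ℤ) : ℝ) := by
          intro i j
          rw [hg]
          dsimp only
          split_ifs with h
          · rw [min_eq_left h]; push_cast; ring
          · rw [min_eq_right (le_of_not_ge h)]; push_cast; ring
        have hC : ∑ i ∈ Finset.Icc 1 F, ∑ j ∈ Finset.Icc 1 F,
            (|(j:ℤ) - (i:ℤ)| - 2 * min |(j:ℤ) - (i:ℤ)| (θ:ℤ))
            = (∑ i ∈ Finset.Icc 1 F, ∑ j ∈ Finset.Icc 1 F, |(j:ℤ) - (i:ℤ)|)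
              - 2 * ∑ i ∈ Finset.Icc 1 F, ∑ j ∈ Finset.Icc 1 F, min |(j:ℤ) - (i:ℤ)| (θ:ℤ) := by
          simp [Finset.sum_sub_distrib, Finset.mul_sum]
        have h1 := sumT1 F
        have h2 := sumT2 θ F hθF
        have hCval : 3 * (∑ i ∈ Finset.Icc 1 F, ∑ j ∈ Finset.Icc 1 F,
            (|(j:ℤ) - (i:ℤ)| - 2 * min |(j:ℤ) - (i:ℤ)| (θ:ℤ)))
            = ((F:ℤ)^3 - F) - 2*(3*F*θ*(θ+1) - θ*(θ+1)*(2*θ+1) + 3*θ*((F:ℤ)-θ)*((F:ℤ)-θ-1)) := by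
          rw [hC]; linarith
        have hg_sum : ∑ i ∈ Finset.Icc 1 F, ∑ j ∈ Finset.Icc 1 F, g i j
            = ((∑ i ∈ Finset.Icc 1 F, ∑ j ∈ Finset.Icc 1 F,
                (|(j:ℤ) - (i:ℤ)| - 2 * min |(j:ℤ) - (i:ℤ)| (θ:ℤ)) : ℤ) : ℝ) := by
          push_cast
          exact Finset.sum_congr rfl fun i _ => Finset.sum_congr rfl fun j _ => by
            rw [ptw i j]; push_cast; ring
        rw [hg_sum]
        have hCr : (3:ℝ) * ((∑ i ∈ Finset.Icc 1 F, ∑ j ∈ Finset.Icc 1 F,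
            (|(j:ℤ) - (i:ℤ)| - 2 * min |(j:ℤ) - (i:ℤ)| (θ:ℤ)) : ℤ) : ℝ)
            = ((F:ℝ)^3 - F) - 2*(3*F*θ*(θ+1) - θ*(θ+1)*(2*θ+1) + 3*θ*((F:ℝ)-θ)*((F:ℝ)-θ-1)) := by
          exact_mod_cast hCval
        have hF0 : (F:ℝ) ≠ 0 := ne_of_gt hFpos
        have hCr' : ((∑ i ∈ Finset.Icc 1 F, ∑ j ∈ Finset.Icc 1 F,
            (|(j:ℤ) - (i:ℤ)| - 2 * min |(j:ℤ) - (i:ℤ)| (θ:ℤ)) : ℤ) : ℝ)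
            = (((F:ℝ)^3 - F) - 2*(3*F*θ*(θ+1) - θ*(θ+1)*(2*θ+1) + 3*θ*((F:ℝ)-θ)*((F:ℝ)-θ-1)))/3 := by
          linarith [hCr]
        rw [hCr']
        field_simp
        ring
end

section
/- The polynomial P(X) = 3000 X⁶ − 8204 X⁵ − 23080 X⁴ + 115251 X³ − 37635 X² − 39150 X + 9000 is strictly decreasing on the interval (0, 1/2) and has exactly one root in (0, 1/2). -/
/-- The polynomial `P(X) = 3000X⁶ - 8204X⁵ - 23080X⁴ + 115251X³ - 37635X² - 39150X + 9000`
is strictly decreasing on `(0, 1/2)` and has exactly one root in `(0, 1/2)`. -/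
theorem fixation_polynomial_decreasing_unique_root :
    StrictAntiOn
      (fun X : ℝ => 3000 * X ^ 6 - 8204 * X ^ 5 - 23080 * X ^ 4 + 115251 * X ^ 3
        - 37635 * X ^ 2 - 39150 * X + 9000)
      (Set.Ioo 0 (1 / 2))
    ∧ ∃! x : ℝ, x ∈ Set.Ioo (0 : ℝ) (1 / 2) ∧
        3000 * x ^ 6 - 8204 * x ^ 5 - 23080 * x ^ 4 + 115251 * x ^ 3
          - 37635 * x ^ 2 - 39150 * x + 9000 = 0 := by
  set f : ℝ → ℝ := fun X => 3000 * X ^ 6 - 8204 * X ^ 5 - 23080 * X ^ 4 + 115251 * X ^ 3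
      - 37635 * X ^ 2 - 39150 * X + 9000 with hf
  have hderiv : ∀ x : ℝ, HasDerivAt f
      (18000*x^5 - 41020*x^4 - 92320*x^3 + 345753*x^2 - 75270*x - 39150) x := by
    intro x
    have h := ((hasDerivAt_id x).pow 6).const_mul (3000 : ℝ)
    -- build derivative by norm_num differentiation
    have : HasDerivAt f
        (3000 * (6 * x ^ 5) - 8204 * (5 * x ^ 4) - 23080 * (4 * x ^ 3)
          + 115251 * (3 * x ^ 2) - 37635 * (2 * x ^ 1) - 39150 * 1 + 0) x := by
      apply HasDerivAt.add
      apply HasDerivAt.sub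
      apply HasDerivAt.sub
      apply HasDerivAt.add
      apply HasDerivAt.sub
      apply HasDerivAt.sub
      · simpa using ((hasDerivAt_pow 6 x).const_mul (3000 : ℝ))
      · simpa using ((hasDerivAt_pow 5 x).const_mul (8204 : ℝ))
      · simpa using ((hasDerivAt_pow 4 x).const_mul (23080 : ℝ))
      · simpa using ((hasDerivAt_pow 3 x).const_mul (115251 : ℝ))
      · simpa using ((hasDerivAt_pow 2 x).const_mul (37635 : ℝ))
      · simpa using ((hasDerivAt_id x).const_mul (39150 : ℝ))
      · exact hasDerivAt_const x 9000
    convert this using 1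
    ring
  have hcont : Continuous f := by
    fun_prop
  have hneg : ∀ x ∈ Set.Ioo (0:ℝ) (1/2),
      18000*x^5 - 41020*x^4 - 92320*x^3 + 345753*x^2 - 75270*x - 39150 < 0 := by
    rintro x ⟨h0, h1⟩
    nlinarith [sq_nonneg x, sq_nonneg (x-1/2), sq_nonneg (x-1/4), mul_pos h0 h0,
      sq_nonneg (x*(x-1/2)), mul_pos (mul_pos h0 h0) h0]
  have hanti : StrictAntiOn f (Set.Ioo 0 (1/2)) := by
    apply StrictAntiOn.mono (s := Set.Icc (0:ℝ) (1/2))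
    · apply strictAntiOn_of_deriv_neg (convex_Icc _ _) hcont.continuousOn
      intro x hx
      rw [interior_Icc] at hx
      rw [(hderiv x).deriv]
      exact hneg x hx
    · exact Set.Ioo_subset_Icc_self
  refine ⟨hanti, ?_⟩
  have h0 : f 0 = 9000 := by norm_num [hf]
  have h12 : f (1/2) < 0 := by norm_num [hf]
  have hmem : (0:ℝ) ∈ Set.Ioo (f (1/2)) (f 0) := ⟨h12, by rw [h0]; norm_num⟩
  have := intermediate_value_Ioo' (by norm_num : (0:ℝ) ≤ 1/2) hcont.continuousOn hmem
  obtain ⟨x, hx, hfx⟩ := this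
  refine ⟨x, ⟨hx, hfx⟩, ?_⟩
  rintro y ⟨hy, hfy⟩
  exact hanti.injOn hy hx (by show f y = f x; rw [hfx]; exact hfy)
end
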